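/- Under the Protocol 1 model: if N ≥ 2 and an attack (U_E, {U_F^{(r)}}) satisfies the no-error conditions (T'), (Z') and (X'), then for each 0 ≤ r ≤ N there exists a family of unit vectors G_{r,w} ∈ EuclideanSpace ℂ (Fin d), indexed only by the Hamming weight w (0 ≤ w ≤ N − r), such that for every injective s : Fin r ↪ Fin N, every input φ ∈ EuclideanSpace ℂ (Fin N → Bool), the final global state (U_F^{(r)} ⊗ Id)(R_s(U_E(ε₀ ⊗ φ))) equals Σ_i φ(i) · G_{r, wt(i∘s̄)} ⊗ δ_{i∘s} ⊗ δ_{i∘s̄}, where R_s is the sorting unitary defined in the context. In particular, Eve's final probe state depends at most on the Hamming weight of the string measured by Bob. -/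

import Mathlib

/-!
Protocol 1 model (randomization-based semi-quantum key distribution):
see Boyer, Gelles, Kenigsberg, Mor, "Semi-Quantum Key Distribution".
-/

namespace SQKD1

/-- Bitstrings of length `N`. -/
abbrev Bits (N : ℕ) := Fin N → Bool

/-- The space attacked by `U_E`: Eve's probe together with the `N` travelling
qubits. -/
abbrev HE (N d : ℕ) := EuclideanSpace ℂ (Fin d × Bits N)

/-- The space attacked by `U_F^{(r)}`: Eve's probe together with the `r`
reflected qubits. -/
abbrev HF (d r : ℕ) := EuclideanSpace ℂ (Fin d × (Fin r → Bool))

/-- Hamming weight of a bitstring. -/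
def wt {n : ℕ} (y : Fin n → Bool) : ℕ := (Finset.univ.filter fun k => y k = true).card

/-- The elementary tensor `v ⊗ δ_u` of a vector `v` of Eve's probe space with a
standard basis vector `δ_u`. -/
noncomputable def tprod {d : ℕ} {ι : Type*} [DecidableEq ι]
    (v : EuclideanSpace ℂ (Fin d)) (u : ι) : EuclideanSpace ℂ (Fin d × ι) :=
  WithLp.toLp 2 (fun p : Fin d × ι => if p.2 = u then v p.1 else 0)

/-- Condition (T'): no error on TEST bits; `U_E (ε₀ ⊗ δ_i) = E_i ⊗ δ_i`. -/
def CondT {N d : ℕ} (hd : 0 < d) (UE : HE N d ≃ₗᵢ[ℂ] HE N d)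
    (E : Bits N → EuclideanSpace ℂ (Fin d)) : Prop :=
  ∀ i : Bits N,
    UE (EuclideanSpace.single ((⟨0, hd⟩ : Fin d), i) 1) = tprod (E i) i

/-- Condition (Z'): no error on Z-CTRL bits;
`U_F^{(r)} (E_i ⊗ δ_{i∘s}) = F_{s,i} ⊗ δ_{i∘s}`. -/
def CondZ {N d : ℕ} (UF : (r : ℕ) → r ≤ N → (HF d r ≃ₗᵢ[ℂ] HF d r))
    (E : Bits N → EuclideanSpace ℂ (Fin d))
    (F : (r : ℕ) → r ≤ N → (Fin r ↪ Fin N) → Bits N → EuclideanSpace ℂ (Fin d)) :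
    Prop :=
  ∀ (r : ℕ) (hr : r ≤ N) (s : Fin r ↪ Fin N) (i : Bits N),
    UF r hr (tprod (E i) (fun p => i (s p))) = tprod (F r hr s i) (fun p => i (s p))

/-- Condition (X'): no error on X-CTRL bits.  For `k := s p`, `i k = false` and
`i'` equal to `i` with bit `k` flipped, the state
`Φ = (1/√2)(F_{s,i} ⊗ δ_{i∘s} + F_{s,i'} ⊗ δ_{i'∘s})` has, at every index
`(a,t)`, the same coefficient as at `(a, t')`, where `t'` is `t` with bit `p`
flipped. -/
def CondX {N d : ℕ}
    (F : (r : ℕ) → r ≤ N → (Fin r ↪ Fin N) → Bits N → EuclideanSpace ℂ (Fin d)) :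
    Prop :=
  ∀ (r : ℕ) (hr : r ≤ N) (s : Fin r ↪ Fin N) (p : Fin r) (i : Bits N),
    i (s p) = false →
      ∀ (a : Fin d) (t : Fin r → Bool),
        ((Real.sqrt 2 : ℂ)⁻¹ •
            (tprod (F r hr s i) (fun q => i (s q)) +
              tprod (F r hr s (Function.update i (s p) true))
                (fun q => Function.update i (s p) true (s q)))) (a, t) =
        ((Real.sqrt 2 : ℂ)⁻¹ •
            (tprod (F r hr s i) (fun q => i (s q)) +
              tprod (F r hr s (Function.update i (s p) true))
                (fun q => Function.update i (s p) true (s q))))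
          (a, Function.update t p (!(t p)))

/-- Hamming weight of the substring of `i` kept (measured) by Bob, i.e. of the
restriction of `i` to the complement of the range of `s`. -/
def wtKept {N r : ℕ} (s : Fin r ↪ Fin N) (i : Bits N) : ℕ :=
  (Finset.univ.filter fun k => k ∉ Finset.univ.map s ∧ i k = true).card

/-- The complement `C_s` of the range of `s` (the positions kept by Bob). -/
def Comp {N r : ℕ} (s : Fin r ↪ Fin N) : Type :=
  {k : Fin N // k ∉ Finset.univ.map s}

instance {N r : ℕ} (s : Fin r ↪ Fin N) : Fintype (Comp s) :=
  Subtype.fintype _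

instance {N r : ℕ} (s : Fin r ↪ Fin N) : DecidableEq (Comp s) :=
  Subtype.instDecidableEq

/-- The target space of the sorting unitary `R_s`: Eve's probe, the `r`
reflected qubits, and the `N - r` qubits kept by Bob. -/
abbrev HT (d : ℕ) {N r : ℕ} (s : Fin r ↪ Fin N) :=
  EuclideanSpace ℂ (Fin d × (Fin r → Bool) × (Comp s → Bool))

/-- The restriction `i∘s̄` of a bitstring to the complement of the range of `s`. -/
def kept {N r : ℕ} (s : Fin r ↪ Fin N) (i : Bits N) : Comp s → Bool :=
  fun c => i c.1

/-- The elementary tensor `v ⊗ δ_u` of a vector `v` of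
`EuclideanSpace ℂ (Fin d × (Fin r → Bool))` with a standard basis vector
`δ_u`, `u : Comp s → Bool`. -/
noncomputable def tprod3 {d N r : ℕ} (s : Fin r ↪ Fin N)
    (v : HF d r) (u : Comp s → Bool) : HT d s :=
  WithLp.toLp 2 (fun q : Fin d × (Fin r → Bool) × (Comp s → Bool) =>
    if q.2.2 = u then v (q.1, q.2.1) else 0)

/-- The initial state `ε₀ ⊗ φ` for Alice's input `φ`. -/
noncomputable def init {N d : ℕ} (hd : 0 < d) (φ : EuclideanSpace ℂ (Bits N)) :
    HE N d :=
  WithLp.toLp 2 (fun q : Fin d × Bits N => if q.1 = (⟨0, hd⟩ : Fin d) then φ q.2 else 0)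

set_option linter.unusedSectionVars false
section Aux
variable {d : ℕ} {ι : Type*} [Fintype ι] [DecidableEq ι]

lemma tprod_apply (v : EuclideanSpace ℂ (Fin d)) (u : ι) (a : Fin d) (j : ι) :
    tprod v u (a, j) = if j = u then v a else 0 := rfl

lemma tprod_inj {v w : EuclideanSpace ℂ (Fin d)} {u : ι}
    (h : tprod v u = tprod w u) : v = w := by
  ext a
  have := congrArg (fun x => x (a, u)) h
  simpa [tprod_apply] using this

lemma norm_tprod (v : EuclideanSpace ℂ (Fin d)) (u : ι) :
    ‖tprod v u‖ = ‖v‖ := by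
  rw [EuclideanSpace.norm_eq, EuclideanSpace.norm_eq]
  congr 1
  rw [Fintype.sum_prod_type]
  apply Finset.sum_congr rfl; intro a _
  rw [Fintype.sum_eq_single u]
  · rw [tprod_apply]; simp
  · intro j hj; rw [tprod_apply]; simp [hj]

lemma tprod_eq_sum (v : EuclideanSpace ℂ (Fin d)) (u : ι) :
    tprod v u = ∑ a : Fin d, v a • EuclideanSpace.single ((a, u) : Fin d × ι) (1:ℂ) := by
  ext p
  obtain ⟨a, j⟩ := p
  simp only [tprod_apply]
  rw [WithLp.ofLp_sum, Fintype.sum_apply]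
  simp only [PiLp.smul_apply, EuclideanSpace.single_apply, smul_eq_mul, mul_ite, mul_one, mul_zero,
    Prod.mk.injEq]
  rw [Fintype.sum_eq_single a]
  · by_cases h : j = u <;> simp [h]
  · intro b hb; simp [Ne.symm hb]
end Aux
section Moves
variable {N d : ℕ}
  {UF : (r : ℕ) → r ≤ N → (HF d r ≃ₗᵢ[ℂ] HF d r)}
  {E : Bits N → EuclideanSpace ℂ (Fin d)}
  {F : (r : ℕ) → r ≤ N → (Fin r ↪ Fin N) → Bits N → EuclideanSpace ℂ (Fin d)}

lemma comp_update (s : Fin r ↪ Fin N) (i : Bits N) (p : Fin r) (b : Bool) :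
    (fun q => Function.update i (s p) b (s q)) = Function.update (fun q => i (s q)) p b := by
  funext q
  by_cases h : q = p
  · subst h; simp [Function.update]
  · rw [Function.update_of_ne h, Function.update_of_ne (fun hc => h (s.injective hc))]

lemma F_flip (hX : CondX F) {r : ℕ} (hr : r ≤ N) (s : Fin r ↪ Fin N) (p : Fin r)
    (i : Bits N) (hi : i (s p) = false) :
    F r hr s i = F r hr s (Function.update i (s p) true) := by
  ext a
  have h := hX r hr s p i hi a (fun q => i (s q))
  have hne : (fun q => Function.update i (s p) true (s q)) ≠ (fun q => i (s q)) := by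
    intro hc
    have := congrFun hc p
    simp [Function.update, hi] at this
  have hup : Function.update (fun q => i (s q)) p (!(i (s p))) =
      (fun q => Function.update i (s p) true (s q)) := by
    rw [comp_update]; rw [hi]; rfl
  rw [hup] at h
  simp only [PiLp.smul_apply, PiLp.add_apply, tprod_apply, smul_eq_mul] at h
  rw [if_neg hne, if_neg (Ne.symm hne)] at h
  simp only [if_true, eq_self_iff_true, add_zero, zero_add] at h
  have h2 : ((Real.sqrt 2 : ℂ))⁻¹ ≠ 0 := by
    simp only [ne_eq, inv_eq_zero, Complex.ofReal_eq_zero]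
    positivity
  have := mul_left_cancel₀ h2 (by simpa using h)
  simpa using this

lemma F_update (hX : CondX F) {r : ℕ} (hr : r ≤ N) (s : Fin r ↪ Fin N) (p : Fin r)
    (i : Bits N) (b : Bool) :
    F r hr s i = F r hr s (Function.update i (s p) b) := by
  by_cases hb : b = i (s p)
  · rw [hb, Function.update_eq_self]
  cases hsp : i (s p)
  · -- i (s p) = false, so b = true
    have hb' : b = true := by cases b with
      | false => exact absurd (hsp.symm) hb
      | true => rfl
    rw [hb']; exact F_flip hX hr s p i hsp
  · -- i (s p) = true, b = false
    have hb' : b = false := by cases b with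
      | false => rfl
      | true => exact absurd (hsp.symm) hb
    subst hb'
    have h1 : (Function.update i (s p) false) (s p) = false := by simp
    have := F_flip hX hr s p (Function.update i (s p) false) h1
    rw [Function.update_idem, ← hsp, Function.update_eq_self] at this
    exact this.symm

end Moves
section Moves2
variable {N d : ℕ}
  {UF : (r : ℕ) → r ≤ N → (HF d r ≃ₗᵢ[ℂ] HF d r)}
  {E : Bits N → EuclideanSpace ℂ (Fin d)}
  {F : (r : ℕ) → r ≤ N → (Fin r ↪ Fin N) → Bits N → EuclideanSpace ℂ (Fin d)}

open Classical in
/-- Patch `i` by the values of `i'` on `s '' Q`. -/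
noncomputable def patch {r : ℕ} (s : Fin r ↪ Fin N) (Q : Finset (Fin r)) (i i' : Bits N) :
    Bits N :=
  fun k => if ∃ p ∈ Q, s p = k then i' k else i k

lemma F_agree (hX : CondX F) {r : ℕ} (hr : r ≤ N) (s : Fin r ↪ Fin N)
    (i i' : Bits N) (h : ∀ k, k ∉ Finset.univ.map s → i k = i' k) :
    F r hr s i = F r hr s i' := by
  classical
  have key : ∀ Q : Finset (Fin r), F r hr s i = F r hr s (patch s Q i i') := by
    intro Q
    induction Q using Finset.induction_on with
    | empty =>
      have : patch s ∅ i i' = i := by funext k; simp [patch]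
      rw [this]
    | @insert p Q hp ih =>
      have hstep : patch s (insert p Q) i i' =
          Function.update (patch s Q i i') (s p) (i' (s p)) := by
        funext k
        by_cases hk : k = s p
        · subst hk
          rw [Function.update_self]
          simp only [patch]
          rw [if_pos ⟨p, Finset.mem_insert_self p Q, rfl⟩]
        · rw [Function.update_of_ne hk]
          simp only [patch]
          congr 1
          simp only [eq_iff_iff]
          constructor
          · rintro ⟨q, hq, rfl⟩
            refine ⟨q, ?_, rfl⟩
            rcases Finset.mem_insert.1 hq with h1 | h1
            · exact absurd (h1 ▸ rfl) hk
            · exact h1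
          · rintro ⟨q, hq, rfl⟩
            exact ⟨q, Finset.mem_insert_of_mem hq, rfl⟩
      rw [hstep, ih]
      exact F_update hX hr s p _ _
  have hfull : patch s Finset.univ i i' = i' := by
    funext k
    simp only [patch]
    by_cases hk : ∃ p ∈ Finset.univ, s p = k
    · rw [if_pos hk]
    · rw [if_neg hk]
      apply h
      simp only [Finset.mem_map, Finset.mem_univ, true_and]
      intro hc
      exact hk (by rcases hc with ⟨q, hq⟩; exact ⟨q, Finset.mem_univ q, hq⟩)
  have := key Finset.univ
  rwa [hfull] at this

lemma F_resort (hZ : CondZ UF E F) {r : ℕ} (hr : r ≤ N) (s s' : Fin r ↪ Fin N)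
    (i : Bits N) (h : ∀ p, i (s p) = i (s' p)) :
    F r hr s i = F r hr s' i := by
  have h1 := hZ r hr s i
  have h2 := hZ r hr s' i
  have hss : (fun p => i (s p)) = (fun p => i (s' p)) := funext h
  rw [hss] at h1
  rw [h1] at h2
  exact tprod_inj h2
end Moves2
section WtAux
variable {N : ℕ}

/-- The single-position embedding `Fin 1 ↪ Fin N`. -/
def emb (k : Fin N) : Fin 1 ↪ Fin N :=
  ⟨fun _ => k, fun a b _ => Subsingleton.elim a b⟩

lemma wt_comp_perm (y : Bits N) (σ : Equiv.Perm (Fin N)) : wt (y ∘ σ) = wt y := by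
  unfold wt
  apply Finset.card_bij' (fun x _ => σ x) (fun x _ => σ.symm x)
  · intro x hx; simp only [Finset.mem_filter, Finset.mem_univ, true_and] at hx ⊢; exact hx
  · intro x hx; simp only [Finset.mem_filter, Finset.mem_univ, true_and,
      Function.comp_apply] at hx ⊢; simpa using hx
  · intro x _; simp
  · intro x _; simp

lemma filter_update_false (i : Bits N) (k : Fin N) :
    (Finset.univ.filter fun x => Function.update i k false x = true) =
      (Finset.univ.filter fun x => i x = true).erase k := by
  ext x
  by_cases hx : x = k
  · subst hx; simp [Function.update_self]
  · simp [Function.update_of_ne hx, hx]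

lemma wt_update_false (i : Bits N) (k : Fin N) :
    wt i = wt (Function.update i k false) + (if i k = true then 1 else 0) := by
  unfold wt
  rw [filter_update_false]
  by_cases hk : i k = true
  · rw [if_pos hk]
    rw [Finset.card_erase_of_mem (by simp [hk])]
    have : 0 < (Finset.univ.filter fun x => i x = true).card :=
      Finset.card_pos.2 ⟨k, by simp [hk]⟩
    omega
  · rw [if_neg hk]
    rw [Finset.erase_eq_of_notMem (by simp [hk])]
    simp

lemma wtKept_emb (i : Bits N) (k : Fin N) :
    wtKept (emb k) i = wt (Function.update i k false) := by
  unfold wtKept wt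
  congr 1
  ext x
  by_cases hx : x = k
  · subst hx; simp [emb, Function.update_self]
    exact fun h => (h rfl).elim
  · simp [emb, Function.update_of_ne hx, hx, Ne.symm hx]
    exact fun _ h => hx h

end WtAux
section One
variable {N d : ℕ}
  {UF : (r : ℕ) → r ≤ N → (HF d r ≃ₗᵢ[ℂ] HF d r)}
  {E : Bits N → EuclideanSpace ℂ (Fin d)}
  {F : (r : ℕ) → r ≤ N → (Fin r ↪ Fin N) → Bits N → EuclideanSpace ℂ (Fin d)}
  (h1 : 1 ≤ N)

lemma F1_update (hX : CondX F) (k : Fin N) (i : Bits N) (b : Bool) :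
    F 1 h1 (emb k) i = F 1 h1 (emb k) (Function.update i k b) :=
  F_update hX h1 (emb k) 0 i b

lemma F1_S (hX : CondX F) (hZ : CondZ UF E F) (k c : Fin N) (i : Bits N)
    (hk : i k = false) :
    F 1 h1 (emb k) i = F 1 h1 (emb c) (i ∘ (Equiv.swap k c)) := by
  by_cases hkc : k = c
  · subst hkc
    simp only [Equiv.swap_self]
    have : i ∘ ⇑(Equiv.refl (Fin N)) = i := rfl
    rw [this]
  have step1 := F1_update h1 hX k i (i c)
  have step2 : F 1 h1 (emb k) (Function.update i k (i c)) =
      F 1 h1 (emb c) (Function.update i k (i c)) := by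
    apply F_resort hZ
    intro p
    show Function.update i k (i c) k = Function.update i k (i c) c
    rw [Function.update_self, Function.update_of_ne (Ne.symm hkc)]
  have step3 := F1_update h1 hX c (Function.update i k (i c)) false
  have step4 : Function.update (Function.update i k (i c)) c false =
      i ∘ (Equiv.swap k c) := by
    funext x
    simp only [Function.comp_apply, Function.update, Equiv.swap_apply_def]
    split_ifs <;> simp_all
  rw [step1, step2, step3, step4]

lemma F1_L2 (hX : CondX F) (hZ : CondZ UF E F) (k c c' : Fin N) (i : Bits N)
    (hk : i k = false) (hc : c ≠ k) (hc' : c' ≠ k) :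
    F 1 h1 (emb k) i = F 1 h1 (emb k) (i ∘ (Equiv.swap c c')) := by
  by_cases hcc : c = c'
  · subst hcc
    simp only [Equiv.swap_self]
    have : i ∘ ⇑(Equiv.refl (Fin N)) = i := rfl
    rw [this]
  have s1 := F1_S h1 hX hZ k c i hk
  have hy1c : (i ∘ ⇑(Equiv.swap k c)) c = false := by
    simp only [Function.comp_apply, Equiv.swap_apply_right]; exact hk
  have s2 := F1_S h1 hX hZ c c' (i ∘ ⇑(Equiv.swap k c)) hy1c
  have hy2c' : ((i ∘ ⇑(Equiv.swap k c)) ∘ ⇑(Equiv.swap c c')) c' = false := by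
    simp only [Function.comp_apply, Equiv.swap_apply_right]; exact hk
  have s3 := F1_S h1 hX hZ c' k (((i ∘ ⇑(Equiv.swap k c)) ∘ ⇑(Equiv.swap c c'))) hy2c'
  have key : (((i ∘ ⇑(Equiv.swap k c)) ∘ ⇑(Equiv.swap c c')) ∘ ⇑(Equiv.swap c' k)) =
      i ∘ ⇑(Equiv.swap c c') := by
    funext x
    simp only [Function.comp_apply]
    congr 1
    simp only [Equiv.swap_apply_def]
    split_ifs <;> simp_all
  rw [s1, s2, s3, key]

end One
section Mis
variable {N d : ℕ}
  {UF : (r : ℕ) → r ≤ N → (HF d r ≃ₗᵢ[ℂ] HF d r)}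
  {E : Bits N → EuclideanSpace ℂ (Fin d)}
  {F : (r : ℕ) → r ≤ N → (Fin r ↪ Fin N) → Bits N → EuclideanSpace ℂ (Fin d)}
  (h1 : 1 ≤ N)

lemma F1_eq_of_eq (hX : CondX F) (hZ : CondZ UF E F) (k k' : Fin N) (y : Bits N)
    (hk : y k = false) (hk' : y k' = false) :
    F 1 h1 (emb k) y = F 1 h1 (emb k') y := by
  have := F1_S h1 hX hZ k k' y hk
  have hswap : y ∘ ⇑(Equiv.swap k k') = y := by
    funext x
    simp only [Function.comp_apply, Equiv.swap_apply_def]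
    split_ifs <;> simp_all
  rwa [hswap] at this

lemma F1_wt_aux (hX : CondX F) (hZ : CondZ UF E F) (n : ℕ) :
    ∀ (y y' : Bits N) (k k' : Fin N),
      (Finset.univ.filter fun x => y x ≠ y' x).card ≤ n →
      y k = false → y' k' = false → wt y = wt y' →
      F 1 h1 (emb k) y = F 1 h1 (emb k') y' := by
  induction n with
  | zero =>
    intro y y' k k' hcard hk hk' _
    have hyy : y = y' := by
      funext x
      by_contra hx
      have : x ∈ Finset.univ.filter fun x => y x ≠ y' x := by simp [hx]
      have := Finset.card_pos.2 ⟨x, this⟩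
      omega
    subst hyy
    exact F1_eq_of_eq h1 hX hZ k k' y hk hk'
  | succ n ih =>
    intro y y' k k' hcard hk hk' hwt
    by_cases hyy : y = y'
    · subst hyy
      exact F1_eq_of_eq h1 hX hZ k k' y hk hk'
    -- find a mismatched pair
    have hA : ¬ (Finset.univ.filter fun x => y x = true) ⊆
        (Finset.univ.filter fun x => y' x = true) := by
      intro hsub
      have heq := Finset.eq_of_subset_of_card_le hsub (le_of_eq hwt.symm)
      apply hyy
      funext x
      have := Finset.ext_iff.1 heq x
      simp only [Finset.mem_filter, Finset.mem_univ, true_and] at this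
      cases hx : y x <;> cases hx' : y' x <;> simp_all
    have hB : ¬ (Finset.univ.filter fun x => y' x = true) ⊆
        (Finset.univ.filter fun x => y x = true) := by
      intro hsub
      have heq := Finset.eq_of_subset_of_card_le hsub (le_of_eq hwt)
      apply hyy
      funext x
      have := Finset.ext_iff.1 heq x
      simp only [Finset.mem_filter, Finset.mem_univ, true_and] at this
      cases hx : y x <;> cases hx' : y' x <;> simp_all
    obtain ⟨x₁, hx₁m, hx₁n⟩ := Finset.not_subset.1 hA
    obtain ⟨x₂, hx₂m, hx₂n⟩ := Finset.not_subset.1 hB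
    simp only [Finset.mem_filter, Finset.mem_univ, true_and] at hx₁m hx₁n hx₂m hx₂n
    have hy1 : y x₁ = true := hx₁m
    have hy1' : y' x₁ = false := by simpa using hx₁n
    have hy2' : y' x₂ = true := hx₂m
    have hy2 : y x₂ = false := by simpa using hx₂n
    have hx12 : x₁ ≠ x₂ := fun h => by rw [h] at hy1; rw [hy1] at hy2; exact Bool.noConfusion hy2
    have hx1k : x₁ ≠ k := fun h => by rw [h, hk] at hy1; exact Bool.noConfusion hy1
    -- the new string
    set y₁ : Bits N := y ∘ ⇑(Equiv.swap x₁ x₂) with hy₁def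
    have hy₁x₁ : y₁ x₁ = false := by
      simp only [hy₁def, Function.comp_apply, Equiv.swap_apply_left]; exact hy2
    have hy₁x₂ : y₁ x₂ = true := by
      simp only [hy₁def, Function.comp_apply, Equiv.swap_apply_right]; exact hy1
    have hwt₁ : wt y₁ = wt y' := by rw [hy₁def, wt_comp_perm]; exact hwt
    have hcard₁ : (Finset.univ.filter fun x => y₁ x ≠ y' x).card ≤ n := by
      have hmem : x₁ ∈ Finset.univ.filter fun x => y x ≠ y' x := by
        simp only [Finset.mem_filter, Finset.mem_univ, true_and]
        rw [hy1, hy1']; simp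
      have hsub : (Finset.univ.filter fun x => y₁ x ≠ y' x) ⊆
          (Finset.univ.filter fun x => y x ≠ y' x).erase x₁ := by
        intro x hx
        simp only [Finset.mem_filter, Finset.mem_univ, true_and] at hx
        by_cases hxx₁ : x = x₁
        · subst hxx₁; rw [hy₁x₁, hy1'] at hx; exact absurd rfl hx
        by_cases hxx₂ : x = x₂
        · subst hxx₂; rw [hy₁x₂, hy2'] at hx; exact absurd rfl hx
        refine Finset.mem_erase.2 ⟨hxx₁, ?_⟩
        simp only [Finset.mem_filter, Finset.mem_univ, true_and]
        rwa [hy₁def, Function.comp_apply, Equiv.swap_apply_of_ne_of_ne hxx₁ hxx₂] at hx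
      have h1' := Finset.card_le_card hsub
      have h2' := Finset.card_erase_of_mem hmem
      have h3' := Finset.card_pos.2 ⟨x₁, hmem⟩
      omega
    by_cases hkx₂ : k = x₂
    · -- pointer moves to x₁
      have step : F 1 h1 (emb k) y = F 1 h1 (emb x₁) y₁ := by
        have htmp := F1_S h1 hX hZ k x₁ y hk
        have e : y ∘ ⇑(Equiv.swap k x₁) = y₁ := by
          rw [hy₁def, hkx₂, Equiv.swap_comm]
        rwa [e] at htmp
      rw [step]
      exact ih y₁ y' x₁ k' hcard₁ hy₁x₁ hk' hwt₁
    · -- pointer stays at k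
      have hy₁k : y₁ k = false := by
        rw [hy₁def, Function.comp_apply,
          Equiv.swap_apply_of_ne_of_ne (Ne.symm hx1k) (fun h => hkx₂ h)]
        exact hk
      have step : F 1 h1 (emb k) y = F 1 h1 (emb k) y₁ :=
        F1_L2 h1 hX hZ k x₁ x₂ y hk hx1k (fun h => hkx₂ h.symm)
      rw [step]
      exact ih y₁ y' k k' hcard₁ hy₁k hk' hwt₁

lemma F1_inv (hX : CondX F) (hZ : CondZ UF E F) (k k' : Fin N) (i i' : Bits N)
    (h : wtKept (emb k) i = wtKept (emb k') i') :
    F 1 h1 (emb k) i = F 1 h1 (emb k') i' := by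
  rw [F1_update h1 hX k i false, F1_update h1 hX k' i' false]
  apply F1_wt_aux h1 hX hZ _ _ _ _ _ (le_refl _) (by simp) (by simp)
  rw [← wtKept_emb, ← wtKept_emb]
  exact h

end Mis
section Inv
variable {N d : ℕ}
  {UF : (r : ℕ) → r ≤ N → (HF d r ≃ₗᵢ[ℂ] HF d r)}
  {E : Bits N → EuclideanSpace ℂ (Fin d)}
  {F : (r : ℕ) → r ≤ N → (Fin r ↪ Fin N) → Bits N → EuclideanSpace ℂ (Fin d)}

lemma E_eq (hN : 2 ≤ N) (hX : CondX F) (hZ : CondZ UF E F) (i i' : Bits N)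
    (h : wt i = wt i') : E i = E i' := by
  have h1 : 1 ≤ N := le_trans one_le_two hN
  -- find positions with equal values
  obtain ⟨k, k', hkk⟩ : ∃ k k', i k = i' k' := by
    by_cases hex : ∃ k, i k = true
    · obtain ⟨k, hkt⟩ := hex
      have : 0 < wt i' := by
        rw [← h]
        exact Finset.card_pos.2 ⟨k, by simp [hkt]⟩
      obtain ⟨k', hk'⟩ := Finset.card_pos.1 this
      simp only [Finset.mem_filter, Finset.mem_univ, true_and] at hk'
      exact ⟨k, k', by rw [hkt, hk']⟩
    · push_neg at hex
      have hk : i ⟨0, by omega⟩ = false := by simpa using hex ⟨0, by omega⟩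
      by_cases hex' : ∃ k', i' k' = false
      · obtain ⟨k', hk'⟩ := hex'
        exact ⟨_, k', by rw [hk, hk']⟩
      · push_neg at hex'
        exfalso
        have : wt i' = N := by
          unfold wt
          rw [Finset.filter_true_of_mem (fun x _ => by simpa using hex' x)]
          simp
        have hz : wt i = 0 := by
          unfold wt
          rw [Finset.filter_false_of_mem (fun x _ => by simpa using hex x)]
          rfl
        omega
  have hF : F 1 h1 (emb k) i = F 1 h1 (emb k') i' := by
    apply F1_inv h1 hX hZ
    rw [wtKept_emb, wtKept_emb]
    have e1 := wt_update_false i k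
    have e2 := wt_update_false i' k'
    rw [hkk] at e1
    omega
  have z1 := hZ 1 h1 (emb k) i
  have z2 := hZ 1 h1 (emb k') i'
  have hc1 : (fun p => i (emb k p)) = fun _ : Fin 1 => i k := rfl
  have hc2 : (fun p => i' (emb k' p)) = fun _ : Fin 1 => i' k' := rfl
  rw [hc1] at z1
  rw [hc2, ← hkk, ← hF] at z2
  rw [← z1] at z2
  exact tprod_inj ((UF 1 h1).injective z2.symm)

/-- `i` with all the reflected (range of `s`) bits set to `false`. -/
def zeroOn {N r : ℕ} (s : Fin r ↪ Fin N) (i : Bits N) : Bits N :=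
  fun k => if k ∈ Finset.univ.map s then false else i k

lemma F_zeroOn (hX : CondX F) {r : ℕ} (hr : r ≤ N) (s : Fin r ↪ Fin N) (i : Bits N) :
    F r hr s i = F r hr s (zeroOn s i) :=
  F_agree hX hr s i (zeroOn s i) (fun k hk => by simp [zeroOn, hk])

lemma zeroOn_comp {r : ℕ} (s : Fin r ↪ Fin N) (i : Bits N) :
    (fun p => zeroOn s i (s p)) = fun _ : Fin r => false := by
  funext p
  simp [zeroOn, Finset.mem_map]

lemma wt_zeroOn {r : ℕ} (s : Fin r ↪ Fin N) (i : Bits N) :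
    wt (zeroOn s i) = wtKept s i := by
  unfold wt wtKept
  congr 1
  ext x
  by_cases hx : x ∈ Finset.univ.map s <;> simp [zeroOn, hx]

lemma F_inv (hN : 2 ≤ N) (hX : CondX F) (hZ : CondZ UF E F) {r : ℕ} (hr : r ≤ N)
    (s s' : Fin r ↪ Fin N) (i i' : Bits N) (h : wtKept s i = wtKept s' i') :
    F r hr s i = F r hr s' i' := by
  rw [F_zeroOn hX hr s i, F_zeroOn hX hr s' i']
  have hE : E (zeroOn s i) = E (zeroOn s' i') :=
    E_eq hN hX hZ _ _ (by rw [wt_zeroOn, wt_zeroOn]; exact h)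
  have z1 := hZ r hr s (zeroOn s i)
  have z2 := hZ r hr s' (zeroOn s' i')
  rw [zeroOn_comp] at z1 z2
  rw [← hE, z1] at z2
  exact tprod_inj z2

end Inv
section Canon
variable {N d : ℕ}
  {UE : HE N d ≃ₗᵢ[ℂ] HE N d}
  {UF : (r : ℕ) → r ≤ N → (HF d r ≃ₗᵢ[ℂ] HF d r)}
  {E : Bits N → EuclideanSpace ℂ (Fin d)}
  {F : (r : ℕ) → r ≤ N → (Fin r ↪ Fin N) → Bits N → EuclideanSpace ℂ (Fin d)}

/-- Canonical embedding: the first `r` positions. -/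
def s0 {r : ℕ} (hr : r ≤ N) : Fin r ↪ Fin N := Fin.castLEEmb hr

/-- Canonical bitstring of kept-weight `w` for the canonical embedding. -/
def std (r w : ℕ) : Bits N := fun k => decide (r ≤ (k : ℕ) ∧ (k : ℕ) < r + w)

lemma mem_map_s0 {r : ℕ} (hr : r ≤ N) (k : Fin N) :
    k ∈ Finset.univ.map (s0 hr) ↔ (k : ℕ) < r := by
  simp only [Finset.mem_map, Finset.mem_univ, true_and]
  constructor
  · rintro ⟨p, rfl⟩
    simpa [s0] using p.isLt
  · intro hk
    exact ⟨⟨(k : ℕ), hk⟩, by apply Fin.ext; simp [s0]⟩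

lemma wtKept_s0_std {r : ℕ} (hr : r ≤ N) (w : ℕ) (hw : w ≤ N - r) :
    wtKept (s0 hr) (std r w : Bits N) = w := by
  unfold wtKept
  have hrw : r + w ≤ N := by omega
  have : (Finset.univ.filter fun k : Fin N => k ∉ Finset.univ.map (s0 hr) ∧ std r w k = true) =
      Finset.univ.filter fun k : Fin N => r ≤ (k : ℕ) ∧ (k : ℕ) < r + w := by
    ext k
    simp only [Finset.mem_filter, Finset.mem_univ, true_and, mem_map_s0, std, decide_eq_true_eq]
    omega
  rw [this]
  have hbij : (Finset.univ.filter fun k : Fin N => r ≤ (k : ℕ) ∧ (k : ℕ) < r + w).card =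
      (Finset.Ico r (r + w)).card := by
    refine Finset.card_bij' (fun (x : Fin N) _ => (x : ℕ))
      (fun (n : ℕ) hn => (⟨n, by simp only [Finset.mem_Ico] at hn; omega⟩ : Fin N))
      ?_ ?_ ?_ ?_
    · intro x hx
      simp only [Finset.mem_filter, Finset.mem_univ, true_and] at hx
      simp only [Finset.mem_Ico]
      omega
    · intro n hn
      simp only [Finset.mem_filter, Finset.mem_univ, true_and]
      simp only [Finset.mem_Ico] at hn
      omega
    · intro x hx; rfl
    · intro n hn; rfl
  rw [hbij, Nat.card_Ico]
  omega

lemma wtKept_le {r : ℕ} (hr : r ≤ N) (s : Fin r ↪ Fin N) (i : Bits N) :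
    wtKept s i ≤ N - r := by
  unfold wtKept
  have hsub : (Finset.univ.filter fun k : Fin N => k ∉ Finset.univ.map s ∧ i k = true) ⊆
      Finset.univ \ Finset.univ.map s := by
    intro k hk
    simp only [Finset.mem_filter] at hk
    simp only [Finset.mem_sdiff, Finset.mem_univ, true_and]
    exact hk.2.1
  have hcard : (Finset.univ \ Finset.univ.map s).card = N - r := by
    rw [Finset.card_sdiff_of_subset (Finset.subset_univ _)]
    simp
  rw [← hcard]
  exact Finset.card_le_card hsub

lemma norm_E (hd : 0 < d) (hT : CondT hd UE E) (i : Bits N) : ‖E i‖ = 1 := by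
  have h := hT i
  have : ‖tprod (E i) i‖ = 1 := by
    rw [← h, LinearIsometryEquiv.norm_map, EuclideanSpace.norm_single]
    simp
  rwa [norm_tprod] at this

lemma norm_F (hd : 0 < d) (hT : CondT hd UE E) (hZ : CondZ UF E F)
    {r : ℕ} (hr : r ≤ N) (s : Fin r ↪ Fin N) (i : Bits N) :
    ‖F r hr s i‖ = 1 := by
  have z := hZ r hr s i
  have : ‖tprod (F r hr s i) (fun p => i (s p))‖ =
      ‖tprod (E i) (fun p => i (s p))‖ := by
    rw [← z, LinearIsometryEquiv.norm_map]
  rw [norm_tprod, norm_tprod] at this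
  rw [this]
  exact norm_E hd hT i

end Canon
section Final
variable {N d : ℕ}

lemma tprod3_apply {r : ℕ} (s : Fin r ↪ Fin N) (v : HF d r) (u : Comp s → Bool)
    (b : Fin d) (t : Fin r → Bool) (u' : Comp s → Bool) :
    tprod3 s v u (b, t, u') = if u' = u then v (b, t) else 0 := rfl

lemma sum_single_eq_tprod3 {r : ℕ} (s : Fin r ↪ Fin N) (v : EuclideanSpace ℂ (Fin d))
    (t0 : Fin r → Bool) (u0 : Comp s → Bool) :
    (∑ a : Fin d, v a • EuclideanSpace.single ((a, t0, u0) : Fin d × (Fin r → Bool) × (Comp s → Bool)) (1:ℂ)) =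
      tprod3 s (tprod v t0) u0 := by
  ext q
  obtain ⟨b, t, u⟩ := q
  rw [WithLp.ofLp_sum, Fintype.sum_apply]
  simp only [PiLp.smul_apply, EuclideanSpace.single_apply, smul_eq_mul, mul_ite, mul_one, mul_zero,
    Prod.mk.injEq]
  rw [tprod3_apply, tprod_apply]
  rw [Fintype.sum_eq_single b]
  · by_cases h1 : u = u0 <;> by_cases h2 : t = t0 <;> simp [h1, h2]
  · intro a ha
    simp [Ne.symm ha]

lemma init_eq_sum (hd : 0 < d) (φ : EuclideanSpace ℂ (Bits N)) :
    init hd φ = ∑ i : Bits N, φ i •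
      EuclideanSpace.single (((⟨0, hd⟩ : Fin d), i) : Fin d × Bits N) (1:ℂ) := by
  ext q
  obtain ⟨b, j⟩ := q
  rw [WithLp.ofLp_sum, Fintype.sum_apply]
  simp only [PiLp.smul_apply, EuclideanSpace.single_apply, smul_eq_mul, mul_ite, mul_one, mul_zero,
    Prod.mk.injEq]
  rw [Fintype.sum_eq_single j]
  · show (if b = ⟨0, hd⟩ then φ j else 0) = _
    by_cases h : b = (⟨0, hd⟩ : Fin d) <;> simp [h]
  · intro i hi
    simp [Ne.symm hi]
end Final

/-- **Theorem 2 of the paper.** If `N ≥ 2` and the attack induces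
no error on TEST and CTRL bits, then for each `r ≤ N` there is a family of unit
vectors `G w` (for Hamming weights `w ≤ N - r`) such that for every injection
`s`, every sorting unitary `R_s` and every unitary `Gm = U_F^{(r)} ⊗ Id`, and
every input `φ`, the final global state `(U_F^{(r)} ⊗ Id)(R_s(U_E(ε₀ ⊗ φ)))`
equals `Σ_i φ(i) · G (wt(i∘s̄)) ⊗ δ_{i∘s} ⊗ δ_{i∘s̄}`: Eve's final probe state
depends at most on the Hamming weight of the string measured by Bob. -/
theorem protocol1_partial_robustness (N d : ℕ) (hN : 2 ≤ N) (hd : 0 < d)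
    (UE : HE N d ≃ₗᵢ[ℂ] HE N d)
    (UF : (r : ℕ) → r ≤ N → (HF d r ≃ₗᵢ[ℂ] HF d r))
    (E : Bits N → EuclideanSpace ℂ (Fin d))
    (F : (r : ℕ) → r ≤ N → (Fin r ↪ Fin N) → Bits N → EuclideanSpace ℂ (Fin d))
    (hT : CondT hd UE E) (hZ : CondZ UF E F) (hX : CondX F) :
    ∀ (r : ℕ) (hr : r ≤ N),
      ∃ G : ℕ → EuclideanSpace ℂ (Fin d),
        (∀ w ≤ N - r, ‖G w‖ = 1) ∧
        ∀ (s : Fin r ↪ Fin N)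
          (R : HE N d ≃ₗᵢ[ℂ] HT d s) (Gm : HT d s ≃ₗᵢ[ℂ] HT d s),
          -- `R` is the sorting unitary `R_s`,
          (∀ (a : Fin d) (i : Bits N),
            R (EuclideanSpace.single (a, i) 1) =
              EuclideanSpace.single (a, fun p => i (s p), kept s i) 1) →
          -- and `Gm` is `U_F^{(r)} ⊗ Id`:
          (∀ (v : HF d r) (u : Comp s → Bool),
            Gm (tprod3 s v u) = tprod3 s (UF r hr v) u) →
          ∀ (φ : EuclideanSpace ℂ (Bits N)) (a : Fin d) (t : Fin r → Bool)
            (u : Comp s → Bool),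
            Gm (R (UE (init hd φ))) (a, t, u) =
              ∑ i : Bits N,
                if t = (fun p => i (s p)) ∧ u = kept s i then
                  φ i * G (wtKept s i) a
                else 0 := by
  intro r hr
  refine ⟨fun w => F r hr (s0 hr) (std r (min w (N - r))), ?_, ?_⟩
  · intro w _
    exact norm_F hd hT hZ hr _ _
  · intro s R Gm hR hGm φ a t u
    have key : ∀ i : Bits N,
        Gm (R (UE (EuclideanSpace.single (((⟨0, hd⟩ : Fin d), i) : Fin d × Bits N) (1:ℂ)))) =
          tprod3 s (tprod (F r hr s i) (fun p => i (s p))) (kept s i) := by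
      intro i
      rw [hT i]
      have hRt : R (tprod (E i) i) =
          tprod3 s (tprod (E i) (fun p => i (s p))) (kept s i) := by
        rw [tprod_eq_sum, map_sum, ← sum_single_eq_tprod3]
        apply Finset.sum_congr rfl
        intro b _
        rw [map_smul, hR]
      rw [hRt, hGm, hZ r hr s i]
    have expand : Gm (R (UE (init hd φ))) =
        ∑ i : Bits N, φ i • tprod3 s (tprod (F r hr s i) (fun p => i (s p))) (kept s i) := by
      rw [init_eq_sum hd φ, map_sum, map_sum, map_sum]
      apply Finset.sum_congr rfl
      intro i _
      rw [map_smul, map_smul, map_smul, key i]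
    rw [expand, WithLp.ofLp_sum, Fintype.sum_apply]
    apply Finset.sum_congr rfl
    intro i _
    simp only [PiLp.smul_apply, smul_eq_mul, tprod3_apply, tprod_apply]
    by_cases h1 : u = kept s i <;> by_cases h2 : t = (fun p => i (s p))
    · rw [if_pos h1, if_pos h2, if_pos ⟨h2, h1⟩]
      congr 1
      have hle := wtKept_le hr s i
      have hmin : min (wtKept s i) (N - r) = wtKept s i := min_eq_left hle
      have hF := F_inv hN hX hZ hr s (s0 hr) i (std r (min (wtKept s i) (N - r)))
        (by rw [hmin, wtKept_s0_std hr _ hle])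
      rw [← hF]
    · simp [h1, h2]
    · simp [h1, h2]
    · simp [h1, h2]

end SQKD1
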